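/- Let e : {1,...,F} × {1,...,N} → {-1,+1} and j ≥ 1. Suppose F > Σ_{ℓ=1}^{j} C(j,ℓ) · Φ_ℓ, where Φ_ℓ is any upper bound on |Σ_{k=1}^{F} e(k,n_{i_1})···e(k,n_{i_ℓ})| over all choices of ℓ distinct positions n_{i_1},...,n_{i_ℓ}. Then for every choice of positions 1 ≤ n_1 < ... < n_j ≤ N and signs ε_1,...,ε_j ∈ {-1,+1}, there exists k ∈ {1,...,F} with e(k,n_i) = ε_i for all i = 1,...,j. -/

import Mathlib

/-- If `F > Σ_{ℓ=1}^{j} C(j,ℓ) Φ_ℓ`, where `Φ_ℓ` bounds all order-`ℓ` correlation sums of the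
columns, then every sign pattern on `j` positions is realized by some sequence. -/
theorem stmt3 (F N j : ℕ) (hj : 1 ≤ j) (e : Fin F → Fin N → ℤ)
    (he : ∀ k n, e k n = 1 ∨ e k n = -1)
    (Φ : ℕ → ℝ)
    (hΦ : ∀ ℓ, 1 ≤ ℓ → ℓ ≤ j → ∀ s : Fin ℓ → Fin N, Function.Injective s →
      |∑ k : Fin F, ∏ i : Fin ℓ, (e k (s i) : ℝ)| ≤ Φ ℓ)
    (hF : (F : ℝ) > ∑ ℓ ∈ Finset.Icc 1 j, (j.choose ℓ : ℝ) * Φ ℓ) :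
    ∀ n : Fin j → Fin N, StrictMono n →
      ∀ ε : Fin j → ℤ, (∀ i, ε i = 1 ∨ ε i = -1) →
        ∃ k : Fin F, ∀ i, e k (n i) = ε i := by
  intro n hn ε hε
  by_contra hcon
  push_neg at hcon
  classical
  -- every indicator product vanishes
  have key : ∀ k : Fin F, ∏ i : Fin j, ((ε i : ℝ) * (e k (n i) : ℝ) + 1) = 0 := by
    intro k
    obtain ⟨i, hi⟩ := hcon k
    apply Finset.prod_eq_zero (Finset.mem_univ i)
    rcases he k (n i) with h1 | h1 <;> rcases hε i with h2 | h2 <;>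
        rw [h1, h2] <;> [skip; norm_num; norm_num; skip] <;>
      exact absurd (h1.trans h2.symm) hi
  set c : Finset (Fin j) → ℝ :=
    fun t => ∑ k : Fin F, ∏ i ∈ t, ((ε i : ℝ) * (e k (n i) : ℝ)) with hc
  have S0 : (∅ : Finset (Fin j)) ∈ (Finset.univ : Finset (Fin j)).powerset := by simp
  have h0 : (0 : ℝ) = ∑ t ∈ (Finset.univ : Finset (Fin j)).powerset, c t := by
    have h1 : (0 : ℝ) = ∑ k : Fin F, ∏ i : Fin j, ((ε i : ℝ) * (e k (n i) : ℝ) + 1) := by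
      simp [key]
    rw [h1]
    rw [Finset.sum_comm]
    refine Finset.sum_congr rfl fun k _ => ?_
    rw [Finset.prod_add]
    simp
  have hF' : (F : ℝ) =
      - ∑ t ∈ ((Finset.univ : Finset (Fin j)).powerset).erase ∅, c t := by
    have := Finset.add_sum_erase _ c S0
    have hcE : c ∅ = (F : ℝ) := by simp [hc]
    rw [← this, hcE] at h0
    linarith
  -- bound each nonempty correlation term
  have hbound : ∀ t ∈ ((Finset.univ : Finset (Fin j)).powerset).erase ∅,
      |c t| ≤ Φ t.card := by
    intro t ht
    rw [Finset.mem_erase] at ht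
    have htne : t.Nonempty := Finset.nonempty_iff_ne_empty.2 ht.1
    have hcard1 : 1 ≤ t.card := Finset.Nonempty.card_pos htne
    have hcardj : t.card ≤ j := by
      simpa using Finset.card_le_card (Finset.subset_univ t)
    -- the enumeration of t
    set σ := t.orderIsoOfFin (rfl : t.card = t.card) with hσ
    set s : Fin t.card → Fin N := fun i => n (σ i) with hs
    have hinj : Function.Injective s := by
      intro a b hab
      exact σ.injective (Subtype.ext (hn.injective hab))
    have hsplit : c t = (∏ i ∈ t, (ε i : ℝ)) * ∑ k : Fin F, ∏ i : Fin t.card,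
        (e k (s i) : ℝ) := by
      rw [hc, Finset.mul_sum]
      refine Finset.sum_congr rfl fun k _ => ?_
      rw [Finset.prod_mul_distrib]
      congr 1
      rw [show (∏ i : Fin t.card, (e k (s i) : ℝ))
          = ∏ x : {x // x ∈ t}, (e k (n x) : ℝ) from
        Equiv.prod_comp σ.toEquiv (fun x : {x // x ∈ t} => (e k (n x) : ℝ))]
      exact (Finset.prod_attach t fun i => (e k (n i) : ℝ)).symm
    have habs1 : |∏ i ∈ t, (ε i : ℝ)| = 1 := by
      rw [Finset.abs_prod]
      refine Finset.prod_eq_one fun i _ => ?_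
      rcases hε i with h | h <;> rw [h] <;> norm_num
    rw [hsplit, abs_mul, habs1, one_mul]
    exact hΦ t.card hcard1 hcardj s hinj
  -- nonnegativity not needed; now chain inequalities
  have hFle : (F : ℝ) ≤ ∑ t ∈ ((Finset.univ : Finset (Fin j)).powerset).erase ∅,
      Φ t.card := by
    rw [hF']
    calc - ∑ t ∈ ((Finset.univ : Finset (Fin j)).powerset).erase ∅, c t
        ≤ |∑ t ∈ ((Finset.univ : Finset (Fin j)).powerset).erase ∅, c t| :=
          neg_le_abs _
      _ ≤ ∑ t ∈ ((Finset.univ : Finset (Fin j)).powerset).erase ∅, |c t| :=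
          Finset.abs_sum_le_sum_abs _ _
      _ ≤ _ := Finset.sum_le_sum hbound
  -- regroup by cardinality
  have hgroup : ∑ t ∈ ((Finset.univ : Finset (Fin j)).powerset).erase ∅,
      Φ t.card = ∑ ℓ ∈ Finset.Icc 1 j, (j.choose ℓ : ℝ) * Φ ℓ := by
    set g : ℕ → ℝ := fun m => if m = 0 then 0 else Φ m with hg
    have h1 : ∑ t ∈ ((Finset.univ : Finset (Fin j)).powerset).erase ∅,
        Φ t.card = ∑ t ∈ ((Finset.univ : Finset (Fin j)).powerset).erase ∅,
        g t.card := by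
      refine Finset.sum_congr rfl fun t ht => ?_
      rw [Finset.mem_erase] at ht
      have : t.card ≠ 0 := by
        simp [Finset.card_eq_zero, ht.1]
      simp [hg, this]
    have h2 : ∑ t ∈ ((Finset.univ : Finset (Fin j)).powerset).erase ∅,
        g t.card = ∑ t ∈ (Finset.univ : Finset (Fin j)).powerset, g t.card := by
      apply Finset.sum_erase
      simp [hg]
    rw [h1, h2, Finset.sum_powerset_apply_card]
    have hcu : (Finset.univ : Finset (Fin j)).card = j := by simp
    rw [hcu]
    have h3 : ∑ m ∈ Finset.range (j + 1), j.choose m • g m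
        = ∑ m ∈ Finset.Icc 0 j, j.choose m • g m := by
      congr 1
      rw [Finset.range_eq_Ico, Nat.Ico_zero_eq_range]
      rw [← Nat.Ico_zero_eq_range, Finset.Ico_add_one_right_eq_Icc]
    rw [h3, ← Finset.insert_Icc_add_one_left_eq_Icc (Nat.zero_le j), Finset.sum_insert (by simp)]
    have : j.choose 0 • g 0 = 0 := by simp [hg]
    rw [this, zero_add]
    refine Finset.sum_congr rfl fun m hm => ?_
    rw [Finset.mem_Icc] at hm
    have : m ≠ 0 := by omega
    simp [hg, this, nsmul_eq_mul]
  rw [hgroup] at hFle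
  linarith
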